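/- Let d = 2 and let M(3) be a moment matrix of a real planar sequence β^{(6)} satisfying the column relation Y = X³ (i.e., the polynomial y − x³ lies in the kernel of M(3) viewed as polynomials). If the variety V of M(3) has at least 7 points and rank M(3) ≤ 7, then every polynomial p ∈ ℝ[x,y] of total degree at most 3 vanishing identically on V satisfies M(3) p̂ = 0. -/

import Mathlib

set_option maxHeartbeats 1000000
set_option synthInstance.maxHeartbeats 200000


open MvPolynomial

namespace Stmt10Aux

noncomputable def phi : Fin 2 → Polynomial ℝ := ![Polynomial.X, Polynomial.X ^ 3]

@[simp] lemma phi0 : phi 0 = Polynomial.X := rfl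
@[simp] lemma phi1 : phi 1 = Polynomial.X ^ 3 := rfl

noncomputable def mk (i j : ℕ) : Fin 2 →₀ ℕ :=
  Finsupp.single 0 i + Finsupp.single 1 j

@[simp] lemma mk_apply0 (i j : ℕ) : mk i j 0 = i := by
  simp [mk, Finsupp.single_apply]

@[simp] lemma mk_apply1 (i j : ℕ) : mk i j 1 = j := by
  simp [mk, Finsupp.single_apply]

lemma eq_mk (m : Fin 2 →₀ ℕ) : m = mk (m 0) (m 1) := by
  ext i
  fin_cases i <;> simp

lemma sum_eq (m : Fin 2 →₀ ℕ) : (m.sum fun _ e => e) = m 0 + m 1 := by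
  rw [Finsupp.sum_fintype _ _ (fun _ => rfl), Fin.sum_univ_two]

lemma g_monomial (m : Fin 2 →₀ ℕ) (c : ℝ) :
    MvPolynomial.aeval phi (monomial m c)
      = Polynomial.C c * Polynomial.X ^ (m 0 + 3 * m 1) := by
  rw [aeval_monomial, Finsupp.prod_pow, Fin.prod_univ_two]
  simp only [phi0, phi1, ← pow_mul, ← pow_add, Polynomial.algebraMap_eq]

lemma g_coeff (p : MvPolynomial (Fin 2) ℝ) (k : ℕ) :
    (MvPolynomial.aeval phi p).coeff k
      = ∑ m ∈ p.support, if m 0 + 3 * m 1 = k then coeff m p else 0 := by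
  conv_lhs => rw [p.as_sum, map_sum]
  rw [Polynomial.finset_sum_coeff]
  refine Finset.sum_congr rfl fun m _ => ?_
  rw [g_monomial, Polynomial.coeff_C_mul, Polynomial.coeff_X_pow, mul_ite, mul_one, mul_zero]
  exact if_congr eq_comm rfl rfl

lemma key (p : MvPolynomial (Fin 2) ℝ)
    (hQ : ∀ m ∈ p.support, m 0 + m 1 ≤ 3 ∧ ¬(m 0 = 3 ∧ m 1 = 0) ∧ ¬(m 0 = 1 ∧ m 1 = 2) ∧
      ¬(m 0 = 0 ∧ m 1 = 3))
    (S' : Finset ℝ) (hS' : 7 ≤ S'.card)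
    (hroots : ∀ t ∈ S', MvPolynomial.eval ![t, t ^ 3] p = 0) : p = 0 := by
  set f : Polynomial ℝ := MvPolynomial.aeval phi p with hf
  have hdeg : f.natDegree ≤ 6 := by
    rw [Polynomial.natDegree_le_iff_coeff_eq_zero]
    intro N hN
    rw [hf, g_coeff]
    refine Finset.sum_eq_zero fun m hm => ?_
    obtain ⟨h1, h2, h3, h4⟩ := hQ m hm
    rw [if_neg]; omega
  have heval : ∀ t : ℝ, f.eval t = MvPolynomial.eval ![t, t ^ 3] p := by
    intro t
    have h2 := MvPolynomial.comp_aeval_apply (R := ℝ) (σ := Fin 2) (S₁ := Polynomial ℝ)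
      (f := phi) (φ := (Polynomial.aeval t : Polynomial ℝ →ₐ[ℝ] ℝ)) p
    rw [hf, ← Polynomial.coe_aeval_eq_eval, h2]
    have h3 : (fun i => Polynomial.aeval t (phi i)) =
        ![t, t ^ 3] := by
      funext i
      fin_cases i <;> simp [phi]
    rw [h3, ← MvPolynomial.coe_aeval_eq_eval]
    rfl
  have hf0 : f = 0 := by
    by_contra hne
    have hsub : S' ⊆ f.roots.toFinset := by
      intro t ht
      rw [Multiset.mem_toFinset, Polynomial.mem_roots hne]
      show f.eval t = 0
      rw [heval t]
      exact hroots t ht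
    have := Finset.card_le_card hsub
    have h2 := Multiset.toFinset_card_le f.roots
    have h3 := Polynomial.card_roots' f
    omega
  ext m
  rw [coeff_zero]
  by_cases hm : m ∈ p.support
  · have h0 : f.coeff (m 0 + 3 * m 1) = 0 := by rw [hf0, Polynomial.coeff_zero]
    rw [hf, g_coeff] at h0
    rw [Finset.sum_eq_single_of_mem m hm] at h0
    · rwa [if_pos rfl] at h0
    · intro m' hm' hne
      rw [if_neg]
      intro hcon
      obtain ⟨a1, a2, a3, a4⟩ := hQ m hm
      obtain ⟨b1, b2, b3, b4⟩ := hQ m' hm'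
      have e0 : m' 0 = m 0 ∧ m' 1 = m 1 := by omega
      exact hne (by rw [eq_mk m', eq_mk m, e0.1, e0.2])
  · exact notMem_support_iff.mp hm

noncomputable def Zsub (V : Set (Fin 2 → ℝ)) :
    Submodule ℝ (MvPolynomial.restrictTotalDegree (Fin 2) ℝ 3) where
  carrier := {p | ∀ x ∈ V, MvPolynomial.eval x (p : MvPolynomial (Fin 2) ℝ) = 0}
  add_mem' := fun {a b} ha hb x hx => by
    simp only [Submodule.coe_add, map_add, ha x hx, hb x hx, add_zero]
  zero_mem' := fun x hx => by simp
  smul_mem' := fun c {a} ha x hx => by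
    rw [SetLike.val_smul, smul_eq_C_mul, map_mul, eval_C, ha x hx, mul_zero]

lemma mem_Zsub {V : Set (Fin 2 → ℝ)} {p : MvPolynomial.restrictTotalDegree (Fin 2) ℝ 3} :
    p ∈ Zsub V ↔ ∀ x ∈ V, MvPolynomial.eval x (p : MvPolynomial (Fin 2) ℝ) = 0 := Iff.rfl

noncomputable def Lmap (V : Set (Fin 2 → ℝ)) : Zsub V →ₗ[ℝ] (Fin 3 → ℝ) where
  toFun p := ![coeff (mk 3 0) (p.1 : MvPolynomial (Fin 2) ℝ),
    coeff (mk 1 2) (p.1 : MvPolynomial (Fin 2) ℝ),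
    coeff (mk 0 3) (p.1 : MvPolynomial (Fin 2) ℝ)]
  map_add' a b := by
    funext i
    fin_cases i <;> simp [coeff_add]
  map_smul' c a := by
    funext i
    fin_cases i <;> simp

end Stmt10Aux

open Stmt10Aux in
/-- Lemma 5.2-style statement: if the planar moment matrix `M(3)` has `y - x³` in its
kernel, its variety `V` has at least 7 points, and `rank M(3) ≤ 7`, then every
polynomial of degree at most 3 vanishing on `V` lies in the kernel of `M(3)`. -/
theorem stmt10 (Λ : MvPolynomial (Fin 2) ℝ →ₗ[ℝ] ℝ)
    (T : MvPolynomial.restrictTotalDegree (Fin 2) ℝ 3 →ₗ[ℝ]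
      (MvPolynomial.restrictTotalDegree (Fin 2) ℝ 3 →ₗ[ℝ] ℝ))
    (hT : ∀ p q : MvPolynomial.restrictTotalDegree (Fin 2) ℝ 3,
      T p q = Λ ((p : MvPolynomial (Fin 2) ℝ) * (q : MvPolynomial (Fin 2) ℝ)))
    (V : Set (Fin 2 → ℝ))
    (hV : V = {x | ∀ p : MvPolynomial.restrictTotalDegree (Fin 2) ℝ 3,
      T p = 0 → MvPolynomial.eval x (p : MvPolynomial (Fin 2) ℝ) = 0})
    (hker : ∀ q : MvPolynomial (Fin 2) ℝ, q.totalDegree ≤ 3 →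
      Λ ((MvPolynomial.X 1 - MvPolynomial.X 0 ^ 3) * q) = 0)
    (hcard : ∃ S : Finset (Fin 2 → ℝ), ↑S ⊆ V ∧ 7 ≤ S.card)
    (hrank : Module.finrank ℝ (LinearMap.range T) ≤ 7) :
    ∀ p : MvPolynomial.restrictTotalDegree (Fin 2) ℝ 3,
      (∀ x ∈ V, MvPolynomial.eval x (p : MvPolynomial (Fin 2) ℝ) = 0) → T p = 0 := by
  classical
  -- the polynomial y - x³ lies in the kernel of T
  have hq0mem : (MvPolynomial.X 1 - MvPolynomial.X 0 ^ 3 : MvPolynomial (Fin 2) ℝ) ∈ MvPolynomial.restrictTotalDegree (Fin 2) ℝ 3 := by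
    rw [mem_restrictTotalDegree]
    refine le_trans (totalDegree_sub _ _) ?_
    simp [totalDegree_X, totalDegree_X_pow]
  set q0 : MvPolynomial.restrictTotalDegree (Fin 2) ℝ 3 := ⟨MvPolynomial.X 1 - MvPolynomial.X 0 ^ 3, hq0mem⟩ with hq0
  have hTq0 : T q0 = 0 := by
    ext q
    rw [hT]
    exact hker _ ((mem_restrictTotalDegree _ _ _).mp q.2)
  have hxy : ∀ x ∈ V, x 1 = x 0 ^ 3 := by
    intro x hx
    rw [hV] at hx
    have := hx q0 hTq0
    simp only [hq0] at this
    simp only [map_sub, map_pow, eval_X] at this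
    linarith [sub_eq_zero.mp this]
  -- the submodule of polynomials vanishing on V
  set Z := Zsub V with hZ
  -- ker T ≤ Z
  have hkerZ : LinearMap.ker T ≤ Z := by
    intro p hp
    rw [LinearMap.mem_ker] at hp
    rw [hZ, mem_Zsub]
    intro x hx
    rw [hV] at hx
    exact hx p hp
  -- the seven points with distinct first coordinates
  obtain ⟨S, hSV, hScard⟩ := hcard
  set S' : Finset ℝ := S.image (fun x => x 0) with hS'
  have hS'card : 7 ≤ S'.card := by
    have hinj : Set.InjOn (fun x : Fin 2 → ℝ => x 0) S := by
      intro x hx y hy hxy0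
      simp only at hxy0
      funext i
      fin_cases i
      · exact hxy0
      · have h1 := hxy x (hSV hx)
        have h2 := hxy y (hSV hy)
        show x 1 = y 1
        rw [h1, h2, hxy0]
    rw [hS', Finset.card_image_of_injOn hinj]
    exact hScard
  -- injectivity of the coefficient map on Z
  have hZinj : ∀ p : MvPolynomial.restrictTotalDegree (Fin 2) ℝ 3, p ∈ Z →
      coeff (mk 3 0) (p : MvPolynomial (Fin 2) ℝ) = 0 →
      coeff (mk 1 2) (p : MvPolynomial (Fin 2) ℝ) = 0 →
      coeff (mk 0 3) (p : MvPolynomial (Fin 2) ℝ) = 0 → p = 0 := by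
    intro p hp h30 h12 h03
    have hpz : (p : MvPolynomial (Fin 2) ℝ) = 0 := by
      apply key
      · intro m hm
        have hdeg : m 0 + m 1 ≤ 3 := by
          rw [← sum_eq]
          exact le_trans (le_totalDegree hm) ((mem_restrictTotalDegree _ _ _).mp p.2)
        refine ⟨hdeg, ?_, ?_, ?_⟩ <;>
          · rintro ⟨e0, e1⟩
            have : m = _ := eq_mk m
            rw [e0, e1] at this
            rw [mem_support_iff, this] at hm
            first
              | exact hm h30
              | exact hm h12
              | exact hm h03
      · exact hS'card
      · intro t ht
        rw [hS', Finset.mem_image] at ht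
        obtain ⟨x, hx, rfl⟩ := ht
        have hxV := hSV hx
        have : ![x 0, x 0 ^ 3] = x := by
          funext i
          fin_cases i
          · rfl
          · exact (hxy x hxV).symm
        rw [this]
        exact hp x hxV
    exact Subtype.ext hpz
  -- linear map Z → ℝ³
  set L := Lmap V with hL
  have hLzero : ∀ p : Zsub V, L p = 0 → p = 0 := by
    intro p hp
    have h30 := congrFun hp 0
    have h12 := congrFun hp 1
    have h03 := congrFun hp 2
    simp only [hL, Lmap, LinearMap.coe_mk, AddHom.coe_mk, Matrix.cons_val_zero,
      Matrix.cons_val_one, Matrix.head_cons, Pi.zero_apply, Matrix.cons_val_two,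
      Matrix.tail_cons] at h30 h12 h03
    exact Subtype.ext (hZinj p.1 p.2 h30 h12 h03)
  have hLinj : Function.Injective L :=
    by
      intro a b hab
      exact sub_eq_zero.mp (hLzero (a - b) (by have h := L.map_sub a b; rw [hab, sub_self] at h; exact h))
  have hZ3 : Module.finrank ℝ Z ≤ 3 := by
    have := LinearMap.finrank_le_finrank_of_injective hLinj
    rwa [Module.finrank_fin_fun] at this
  -- finrank P ≥ 10
  have hP10 : 10 ≤ Module.finrank ℝ (MvPolynomial.restrictTotalDegree (Fin 2) ℝ 3) := by
    set s : Set (Fin 2 →₀ ℕ) := {n | (n.sum fun _ e => e) ≤ 3} with hs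
    have b : Module.Basis s ℝ (MvPolynomial.restrictTotalDegree (Fin 2) ℝ 3) := basisRestrictSupport ℝ s
    set A : Fin 10 → ℕ := ![0, 1, 2, 3, 0, 1, 2, 0, 1, 0] with hA
    set B : Fin 10 → ℕ := ![0, 0, 0, 0, 1, 1, 1, 2, 2, 3] with hB
    have hmem : ∀ k : Fin 10, mk (A k) (B k) ∈ s := by
      intro k
      rw [hs, Set.mem_setOf_eq, sum_eq, mk_apply0, mk_apply1]
      fin_cases k <;> decide
    set F : Fin 10 → s := fun k => ⟨mk (A k) (B k), hmem k⟩ with hF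
    have hFinj : Function.Injective F := by
      intro k l hkl
      have h1 : mk (A k) (B k) = mk (A l) (B l) := Subtype.ext_iff.mp hkl
      have hA1 : A k = A l := by
        have := congrArg (fun m => m 0) h1
        simpa using this
      have hB1 : B k = B l := by
        have := congrArg (fun m => m 1) h1
        simpa using this
      fin_cases k <;> fin_cases l <;> first | rfl | (exfalso; revert hA1 hB1; decide)
    have hli : LinearIndependent ℝ (b ∘ F) := b.linearIndependent.comp F hFinj
    have := hli.fintype_card_le_finrank
    simpa using this
  -- rank-nullity
  have hrn := LinearMap.finrank_range_add_finrank_ker T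
  have hker3 : 3 ≤ Module.finrank ℝ (LinearMap.ker T) := by omega
  have hZker : LinearMap.ker T = Z :=
    Submodule.eq_of_le_of_finrank_le hkerZ (le_trans hZ3 hker3)
  intro p hpvan
  have : p ∈ Z := hpvan
  rw [← hZker, LinearMap.mem_ker] at this
  exact this
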